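/- Let T > 0 and let g : [0,T] → ℝ be a function such that (i) for all a, b ∈ [0,T] and λ ∈ [0,1], g(λa + (1−λ)b) ≤ max{g(a), g(b)}, and (ii) g has a right derivative at 0 with g'(0) > 0. Then g is non-decreasing on [0,T]. -/

import Mathlib

open Topology Filter


theorem quasiconvex_pos_right_deriv_monotone
    (T : ℝ) (hT : 0 < T) (g : ℝ → ℝ) (d : ℝ)
    (hqc : ∀ a ∈ Set.Icc 0 T, ∀ b ∈ Set.Icc 0 T, ∀ l ∈ Set.Icc (0:ℝ) 1,
      g (l * a + (1 - l) * b) ≤ max (g a) (g b))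
    (hderiv : HasDerivWithinAt g d (Set.Ici 0) 0) (hd : 0 < d) :
    MonotoneOn g (Set.Icc 0 T) := by
  intro x hx y hy hxy
  by_contra hgt
  push_neg at hgt
  have hxney : x ≠ y := fun h => by rw [h] at hgt; exact lt_irrefl _ hgt
  have hxy' : x < y := lt_of_le_of_ne hxy hxney
  have hy0 : 0 < y := lt_of_le_of_lt hx.1 hxy'
  have h0T : (0:ℝ) ∈ Set.Icc 0 T := ⟨le_refl 0, le_of_lt hT⟩
  have key : ∀ u, 0 ≤ u → u ≤ y → g u ≤ max (g 0) (g y) := by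
    intro u hu huy
    have hl : (1 - u / y) ∈ Set.Icc (0:ℝ) 1 := by
      constructor
      · have : u / y ≤ 1 := (div_le_one hy0).mpr huy
        linarith
      · have : 0 ≤ u / y := div_nonneg hu hy0.le
        linarith
    have := hqc 0 h0T y hy (1 - u / y) hl
    have heq : (1 - u / y) * 0 + (1 - (1 - u / y)) * y = u := by
      field_simp
      ring
    rwa [heq] at this
  have hgx : g x ≤ g 0 := by
    have := key x hx.1 hxy
    rcases le_max_iff.mp this with h | h
    · exact h
    · linarith
  have hgy : g y < g 0 := lt_of_lt_of_le hgt hgx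
  have hkey2 : ∀ u, 0 ≤ u → u ≤ y → g u ≤ g 0 := by
    intro u hu huy
    have := key u hu huy
    rw [max_eq_left hgy.le] at this
    exact this
  rw [hasDerivWithinAt_iff_tendsto_slope] at hderiv
  have h1 : ∀ᶠ t in 𝓝[Set.Ici 0 \ {0}] (0:ℝ), slope g 0 t ∈ Set.Ioi 0 :=
    hderiv (Ioi_mem_nhds hd)
  have h2 : ∀ᶠ t in 𝓝[Set.Ici 0 \ {0}] (0:ℝ), t < y :=
    eventually_nhdsWithin_of_eventually_nhds (Filter.Tendsto.eventually_lt_const hy0 Filter.tendsto_id)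
  have h3 : ∀ᶠ t in 𝓝[Set.Ici 0 \ {0}] (0:ℝ), t ∈ Set.Ici 0 \ {0} :=
    self_mem_nhdsWithin
  have hset : Set.Ici (0:ℝ) \ {0} = Set.Ioi 0 := by
    ext t
    simp [Set.mem_diff, lt_iff_le_and_ne, eq_comm]
  have hne : (𝓝[Set.Ici (0:ℝ) \ {0}] (0:ℝ)).NeBot := by
    rw [hset]; infer_instance
  obtain ⟨t, hts, hty, htm⟩ := ((h1.and h2).and h3).exists
  have ht0 : 0 < t := lt_of_le_of_ne hty (fun h => htm h.symm)
  have hslope : 0 < (g t - g 0) / t := by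
    have : slope g 0 t = (g t - g 0) / t := by
      rw [slope_def_field]; field_simp [div_eq_div_iff ht0.ne']
      rw [sub_zero, mul_div_cancel_right₀ _ ht0.ne']
    rw [this] at hts; exact hts.1
  have hgt0 : g 0 < g t := by
    have := mul_pos hslope ht0
    rw [div_mul_cancel₀ _ ht0.ne'] at this
    linarith
  have := hkey2 t ht0.le hts.2.le
  linarith
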